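/- Let A and B be groups and let G = A ∗ B be their free product (coproduct of groups). Suppose G acts by automorphisms on a tree X (a connected acyclic simple graph), suppose v and w are adjacent vertices of X such that a • v = v for all a ∈ A and b • w = w for all b ∈ B, while a • w ≠ w for every a ∈ A with a ≠ 1 and b • v ≠ v for every b ∈ B with b ≠ 1. Then every element g ∈ G that is not conjugate in G to an element of the image of A or of the image of B fixes no vertex of X: for every vertex u, g • u ≠ u. -/

import Mathlib

open Monoid SimpleGraph

namespace Stmt13Aux

def pow' {α : Type*} (L : List α) : ℕ → List α
  | 0 => []
  | n + 1 => L ++ pow' L n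


variable {V : Type*} {X : SimpleGraph V}

/-- Concatenating an edge onto a path whose endpoint-extension is fresh gives a path. -/
lemma path_concat {u p q : V} {P : X.Walk u q} (hP : P.IsPath) (h : X.Adj q p)
    (hp : p ∉ P.support) : (P.concat h).IsPath := by
  rw [← Walk.isPath_reverse_iff, Walk.reverse_concat, Walk.cons_isPath_iff]
  exact ⟨hP.reverse, by simpa using hp⟩

/-- In a tree, a neighbor of `p` is never at the same distance from `u` as `p`. -/
lemma not_dist_eq (htree : X.IsTree) (u : V) {p q' : V} (h : X.Adj p q') :
    X.dist u q' ≠ X.dist u p := by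
  classical
  intro heq
  obtain ⟨P, hP, hlen⟩ := htree.isConnected.exists_path_of_dist u q'
  have hpns : p ∉ P.support := by
    intro hmem
    have h1 : X.dist u p ≤ (P.takeUntil p hmem).length := X.dist_le _
    have h2 : (P.takeUntil p hmem).length + (P.dropUntil p hmem).length = P.length := by
      rw [← Walk.length_append, Walk.take_spec]
    have h3 : 1 ≤ (P.dropUntil p hmem).length := by
      have h4 := X.dist_le (P.dropUntil p hmem)
      have h5 : X.dist p q' = 1 := by rwa [dist_eq_one_iff_adj]
      omega
    omega
  have hcp : (P.concat h.symm).IsPath := path_concat hP h.symm hpns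
  obtain ⟨Q, hQ, hQlen⟩ := htree.isConnected.exists_path_of_dist u p
  have := (htree.existsUnique_path u p).unique hcp hQ
  have hl : (P.concat h.symm).length = Q.length := by rw [this]
  rw [Walk.length_concat, hlen, hQlen, heq] at hl
  omega

/-- In a tree, the neighbor of `p` closer to `u` is unique. -/
lemma closer_unique (htree : X.IsTree) (u : V) {p q q'' : V} (h1 : X.Adj p q) (h2 : X.Adj p q'')
    (hd1 : X.dist u q + 1 = X.dist u p) (hd2 : X.dist u q'' + 1 = X.dist u p) : q = q'' := by
  classical
  obtain ⟨P1, hP1, hl1⟩ := htree.isConnected.exists_path_of_dist u q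
  obtain ⟨P2, hP2, hl2⟩ := htree.isConnected.exists_path_of_dist u q''
  have hm1 : p ∉ P1.support := by
    intro hmem
    have := X.dist_le (P1.takeUntil p hmem)
    have := Walk.length_takeUntil_le P1 hmem
    omega
  have hm2 : p ∉ P2.support := by
    intro hmem
    have := X.dist_le (P2.takeUntil p hmem)
    have := Walk.length_takeUntil_le P2 hmem
    omega
  have hc1 : (P1.concat h1.symm).IsPath := path_concat hP1 h1.symm hm1
  have hc2 : (P2.concat h2.symm).IsPath := path_concat hP2 h2.symm hm2
  have heq : P1.concat h1.symm = P2.concat h2.symm :=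
    (htree.existsUnique_path u p).unique hc1 hc2
  have : (P1.concat h1.symm).reverse.getVert 1 = (P2.concat h2.symm).reverse.getVert 1 := by
    rw [heq]
  simpa [Walk.reverse_concat] using this

/-- KEY: if `q` is the neighbor of `p` on the geodesic from `u`, any other neighbor `q'`
is farther. -/
lemma step_far (htree : X.IsTree) (u : V) {p q q' : V} (hq : X.Adj p q) (hq' : X.Adj p q')
    (hne : q' ≠ q) (hd : X.dist u p = X.dist u q + 1) : X.dist u q' = X.dist u p + 1 := by
  have hpq' : X.dist p q' = 1 := by rwa [dist_eq_one_iff_adj]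
  have t1 : X.dist u q' ≤ X.dist u p + 1 := by
    have := htree.isConnected.dist_triangle (u := u) (v := p) (w := q')
    omega
  have t2 : X.dist u p ≤ X.dist u q' + 1 := by
    have := htree.isConnected.dist_triangle (u := u) (v := q') (w := p)
    have : X.dist q' p = 1 := by rw [SimpleGraph.dist_eq_one_iff_adj]; exact hq'.symm
    omega
  have t3 : X.dist u q' ≠ X.dist u p := not_dist_eq htree u hq'
  have t4 : X.dist u q' + 1 ≠ X.dist u p := fun h => hne (closer_unique htree u hq' hq h hd.symm)
  omega


variable {A B : Type*} [Group A] [Group B]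

/-- Embed a letter into the free product. -/
def emb : A ⊕ B → Coprod A B := Sum.elim Coprod.inl Coprod.inr

/-- Product of a word. -/
def prodW (L : List (A ⊕ B)) : Coprod A B := (L.map emb).prod

/-- A reduced word: letters alternate sides and are nontrivial. -/
def Red (L : List (A ⊕ B)) : Prop :=
  L.Chain' (fun x y => x.isLeft ≠ y.isLeft) ∧
    ∀ x ∈ L, x ≠ Sum.inl (1 : A) ∧ x ≠ Sum.inr (1 : B)

@[simp] lemma prodW_nil : prodW ([] : List (A ⊕ B)) = 1 := rfl

@[simp] lemma prodW_cons (x : A ⊕ B) (L : List (A ⊕ B)) :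
    prodW (x :: L) = emb x * prodW L := by simp [prodW]

lemma prodW_append (L₁ L₂ : List (A ⊕ B)) :
    prodW (L₁ ++ L₂) = prodW L₁ * prodW L₂ := by simp [prodW]

lemma red_nil : Red ([] : List (A ⊕ B)) := ⟨List.isChain_nil, by simp⟩

lemma Red.tail {x : A ⊕ B} {L : List (A ⊕ B)} (h : Red (x :: L)) : Red L :=
  ⟨h.1.tail, fun y hy => h.2 y (List.mem_cons_of_mem _ hy)⟩

/-- Prepending a letter to a reduced word can be fixed up to a reduced word. -/
lemma prepend (x : A ⊕ B) (L : List (A ⊕ B)) (hL : Red L) :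
    ∃ L', Red L' ∧ prodW L' = emb x * prodW L := by
  by_cases hx : x = Sum.inl (1 : A) ∨ x = Sum.inr (1 : B)
  · refine ⟨L, hL, ?_⟩
    rcases hx with h | h <;> simp [h, emb]
  push_neg at hx
  match L with
  | [] =>
      exact ⟨[x], ⟨List.isChain_singleton _, by simpa using hx⟩, by simp⟩
  | y :: M =>
      by_cases hty : x.isLeft = y.isLeft
      · -- same side: merge
        match x, y, hty with
        | Sum.inl a, Sum.inl a', _ =>
            by_cases hz : a * a' = 1
            · refine ⟨M, hL.tail, ?_⟩
              have : emb (Sum.inl a : A ⊕ B) * emb (Sum.inl a' : A ⊕ B) = 1 := by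
                simp [emb, ← map_mul, hz]
              simp [← mul_assoc, this]
            · refine ⟨Sum.inl (a * a') :: M, ⟨?_, ?_⟩, ?_⟩
              · rcases M with _ | ⟨z, M'⟩
                · exact List.isChain_singleton _
                · have := hL.1.rel_head
                  exact List.IsChain.cons_cons (by simpa using this) (hL.1.tail)
              · intro t ht
                rcases List.mem_cons.1 ht with rfl | ht
                · simpa using hz
                · exact hL.2 t (List.mem_cons_of_mem _ ht)
              · simp [emb, ← mul_assoc, ← map_mul]
        | Sum.inr b, Sum.inr b', _ =>
            by_cases hz : b * b' = 1
            · refine ⟨M, hL.tail, ?_⟩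
              have : emb (Sum.inr b : A ⊕ B) * emb (Sum.inr b' : A ⊕ B) = 1 := by
                simp [emb, ← map_mul, hz]
              simp [← mul_assoc, this]
            · refine ⟨Sum.inr (b * b') :: M, ⟨?_, ?_⟩, ?_⟩
              · rcases M with _ | ⟨z, M'⟩
                · exact List.isChain_singleton _
                · have := hL.1.rel_head
                  exact List.IsChain.cons_cons (by simpa using this) (hL.1.tail)
              · intro t ht
                rcases List.mem_cons.1 ht with rfl | ht
                · simpa using hz
                · exact hL.2 t (List.mem_cons_of_mem _ ht)
              · simp [emb, ← mul_assoc, ← map_mul]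
      · -- different sides: just cons
        refine ⟨x :: y :: M, ⟨List.IsChain.cons_cons hty hL.1, ?_⟩, by simp⟩
        intro t ht
        rcases List.mem_cons.1 ht with rfl | ht
        · simpa using hx
        · exact hL.2 t ht

/-- Every element of the free product is the product of some reduced word. -/
lemma exists_red (g : Coprod A B) : ∃ L, Red L ∧ prodW L = g := by
  induction g using Coprod.induction_on' with
  | one => exact ⟨[], red_nil, rfl⟩
  | inl_mul a x ih =>
      obtain ⟨L, hL, hp⟩ := ih
      obtain ⟨L', hL', hp'⟩ := prepend (Sum.inl a) L hL
      exact ⟨L', hL', by rw [hp', hp]; rfl⟩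
  | inr_mul b x ih =>
      obtain ⟨L, hL, hp⟩ := ih
      obtain ⟨L', hL', hp'⟩ := prepend (Sum.inr b) L hL
      exact ⟨L', hL', by rw [hp', hp]; rfl⟩

/-- inverse of a letter -/
def invL : A ⊕ B → A ⊕ B := Sum.map (·⁻¹) (·⁻¹)

lemma emb_invL (x : A ⊕ B) : emb (invL x) = (emb x)⁻¹ := by
  cases x <;> simp [emb, invL]

lemma red_inv_reverse {L : List (A ⊕ B)} (hL : Red L) :
    Red ((L.map invL).reverse) ∧ prodW ((L.map invL).reverse) = (prodW L)⁻¹ := by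
  constructor
  · constructor
    · unfold List.Chain'
      rw [List.isChain_reverse, List.isChain_map]
      refine hL.1.imp ?_
      intro x y h
      cases x <;> cases y <;> simp_all [invL, flip]
    · intro t ht
      rw [List.mem_reverse, List.mem_map] at ht
      obtain ⟨s, hs, rfl⟩ := ht
      have := hL.2 s hs
      cases s <;> simp_all [invL]
  · rw [prodW, List.map_reverse, List.prod_reverse_noncomm, List.map_map, List.map_map, prodW]
    congr 2
    apply List.map_congr_left
    intro s _
    simp [Function.comp, emb_invL]


lemma dist_smul' (hconn : X.Connected) {G : Type*} [Group G] [MulAction G V]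
    (hact : ∀ (g : G) (u u' : V), X.Adj u u' → X.Adj (g • u) (g • u')) (g : G) (x y : V) :
    X.dist (g • x) (g • y) = X.dist x y := by
  have key : ∀ (h : G) (x y : V), X.dist (h • x) (h • y) ≤ X.dist x y := by
    intro h x y
    obtain ⟨p, hlen⟩ := hconn.exists_walk_length_eq_dist x y
    let f : X →g X := ⟨fun u => h • u, fun ha => hact h _ _ ha⟩
    calc X.dist (h • x) (h • y) ≤ (p.map f).length := X.dist_le _
    _ = X.dist x y := by rw [Walk.length_map, hlen]
  refine le_antisymm (key g x y) ?_
  have := key g⁻¹ (g • x) (g • y)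
  simpa using this

variable {A B : Type*} [Group A] [Group B] [MulAction (Coprod A B) V]

section
variable (htree : X.IsTree)
    (hact : ∀ (g : Coprod A B) (u u' : V), X.Adj u u' → X.Adj (g • u) (g • u'))
    {v w : V} (hvw : X.Adj v w)
    (hAv : ∀ a : A, (Coprod.inl a : Coprod A B) • v = v)
    (hBw : ∀ b : B, (Coprod.inr b : Coprod A B) • w = w)
    (hAw : ∀ a : A, a ≠ 1 → (Coprod.inl a : Coprod A B) • w ≠ w)
    (hBv : ∀ b : B, b ≠ 1 → (Coprod.inr b : Coprod A B) • v ≠ v)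

include htree hact hvw hAv hAw in
lemma stepA {a : A} (ha : a ≠ 1) {u : V} (hu : X.dist u v = X.dist u w + 1) :
    X.dist ((Coprod.inl a : Coprod A B) • u) v = X.dist u w + 1 ∧
    X.dist ((Coprod.inl a : Coprod A B) • u) w = X.dist u w + 2 := by
  have hds := dist_smul' htree.isConnected hact
  constructor
  · conv_lhs => rw [← hAv a]
    rw [hds]; exact hu
  · have h1 : X.dist ((Coprod.inl a : Coprod A B) • u) w
        = X.dist u ((Coprod.inl a⁻¹ : Coprod A B) • w) := by
      conv_lhs => rw [show w = (Coprod.inl a : Coprod A B) •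
          ((Coprod.inl a⁻¹ : Coprod A B) • w) by rw [← mul_smul, ← map_mul]; simp]
      rw [hds]
    rw [h1]
    have hadj : X.Adj v ((Coprod.inl a⁻¹ : Coprod A B) • w) := by
      have := hact (Coprod.inl a⁻¹) v w hvw
      rwa [hAv] at this
    have hne : (Coprod.inl a⁻¹ : Coprod A B) • w ≠ w := hAw a⁻¹ (inv_ne_one.2 ha)
    have := step_far htree u hvw hadj hne hu
    omega

include htree hact hvw hBw hBv in
lemma stepB {b : B} (hb : b ≠ 1) {u : V} (hu : X.dist u w = X.dist u v + 1) :
    X.dist ((Coprod.inr b : Coprod A B) • u) w = X.dist u v + 1 ∧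
    X.dist ((Coprod.inr b : Coprod A B) • u) v = X.dist u v + 2 := by
  have hds := dist_smul' htree.isConnected hact
  constructor
  · conv_lhs => rw [← hBw b]
    rw [hds]; exact hu
  · have h1 : X.dist ((Coprod.inr b : Coprod A B) • u) v
        = X.dist u ((Coprod.inr b⁻¹ : Coprod A B) • v) := by
      conv_lhs => rw [show v = (Coprod.inr b : Coprod A B) •
          ((Coprod.inr b⁻¹ : Coprod A B) • v) by rw [← mul_smul, ← map_mul]; simp]
      rw [hds]
    rw [h1]
    have hadj : X.Adj w ((Coprod.inr b⁻¹ : Coprod A B) • v) := by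
      have := hact (Coprod.inr b⁻¹) w v hvw.symm
      rwa [hBw] at this
    have hne : (Coprod.inr b⁻¹ : Coprod A B) • v ≠ v := hBv b⁻¹ (inv_ne_one.2 hb)
    have := step_far htree u hvw.symm hadj hne hu
    omega

include htree hact hvw hAv hBw hAw hBv in
lemma grow (L : List (A ⊕ B)) (hr : Red L) (hlast : ∀ x ∈ L.getLast?, x.isRight = true) :
    ((∀ x ∈ L.head?, x.isLeft = true) →
      X.dist (prodW L • v) v = L.length ∧ X.dist (prodW L • v) w = L.length + 1)
    ∧ ((∀ x ∈ L.head?, x.isRight = true) → L ≠ [] →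
      X.dist (prodW L • v) w = L.length ∧ X.dist (prodW L • v) v = L.length + 1) := by
  induction L with
  | nil =>
      refine ⟨fun _ => ?_, fun _ h => absurd rfl h⟩
      simp [prodW_nil, X.dist_self]
      exact hvw
  | cons x M ih =>
      have hM : Red M := hr.tail
      have hnt := hr.2 x (List.mem_cons_self)
      cases x with
      | inl a =>
          have ha : a ≠ 1 := by simpa using hnt.1
          -- M must be nonempty with head of B type
          match M, hM, ih with
          | [], _, _ =>
              exfalso
              have := hlast (Sum.inl a) (by simp)
              simp at this
          | (y :: M'), hM, ih =>
              have hlast' : ∀ x ∈ (y :: M').getLast?, x.isRight = true := by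
                intro t ht
                exact hlast t (by rwa [List.getLast?_cons_cons])
              have hy : y.isRight = true := by
                have := hr.1.rel_head
                cases y <;> simp_all
              have ihh := (ih hM hlast').2 (by intro t ht; simp at ht; subst ht; exact hy)
                (by simp)
              simp only [List.length_cons] at ihh
              constructor
              · intro _
                have hu : X.dist (prodW (y :: M') • v) v
                    = X.dist (prodW (y :: M') • v) w + 1 := by omega
                have hs := stepA htree hact hvw hAv hAw ha hu
                have hsm : prodW (Sum.inl a :: y :: M') • v
                    = (Coprod.inl a : Coprod A B) • (prodW (y :: M') • v) := by
                  rw [prodW_cons, mul_smul]; rfl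
                rw [hsm]
                constructor
                · rw [hs.1]; simp only [List.length_cons]; omega
                · rw [hs.2]; simp only [List.length_cons]; omega
              · intro h
                exfalso
                have := h (Sum.inl a) (by simp)
                simp at this
      | inr b =>
          have hb : b ≠ 1 := by simpa using hnt.2
          refine ⟨fun h => absurd (h (Sum.inr b) (by simp)) (by simp), fun _ _ => ?_⟩
          match M, hM, ih with
          | [], _, _ =>
              have hu : X.dist v w = X.dist v v + 1 := by
                rw [X.dist_self]
                rw [dist_eq_one_iff_adj]; exact hvw
              have hs := stepB htree hact hvw hBw hBv hb hu
              have hsm : prodW [(Sum.inr b : A ⊕ B)] • v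
                  = (Coprod.inr b : Coprod A B) • v := by
                rw [show prodW [(Sum.inr b : A ⊕ B)] = Coprod.inr b by simp [prodW, emb]]
              rw [hsm]
              rw [X.dist_self] at hs
              simpa using hs
          | (y :: M'), hM, ih =>
              have hlast' : ∀ x ∈ (y :: M').getLast?, x.isRight = true := by
                intro t ht
                exact hlast t (by rwa [List.getLast?_cons_cons])
              have hy : y.isLeft = true := by
                have := hr.1.rel_head
                cases y <;> simp_all
              have ihh := (ih hM hlast').1 (by intro t ht; simp at ht; subst ht; exact hy)
              simp only [List.length_cons] at ihh
              have hu : X.dist (prodW (y :: M') • v) w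
                  = X.dist (prodW (y :: M') • v) v + 1 := by omega
              have hs := stepB htree hact hvw hBw hBv hb hu
              have hsm : prodW (Sum.inr b :: y :: M') • v
                  = (Coprod.inr b : Coprod A B) • (prodW (y :: M') • v) := by
                rw [prodW_cons, mul_smul]; rfl
              rw [hsm]
              constructor
              · rw [hs.1]; simp only [List.length_cons]; omega
              · rw [hs.2]; simp only [List.length_cons]; omega

omit htree hact hvw hAv hBw hAw hBv in
lemma pow'_facts (L : List (A ⊕ B)) (hr : Red L) (hne : L ≠ [])
    (hht : ∀ x ∈ L.getLast?, ∀ y ∈ L.head?, x.isLeft ≠ y.isLeft) :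
    ∀ n : ℕ, Red (pow' L n) ∧ prodW (pow' L n) = (prodW L) ^ n ∧
      (pow' L n).length = n * L.length ∧
      (n ≠ 0 → (pow' L n).head? = L.head? ∧ (pow' L n).getLast? = L.getLast?) := by
  intro n
  induction n with
  | zero => exact ⟨red_nil, by simp [pow'], by simp [pow'], fun h => absurd rfl h⟩
  | succ n ih =>
      obtain ⟨ihr, ihp, ihl, ihe⟩ := ih
      have hlen : (pow' L (n+1)).length = (n+1) * L.length := by
        simp only [pow', List.length_append, ihl]; ring
      have hred : Red (pow' L (n+1)) := by
        constructor
        · refine List.IsChain.append hr.1 ihr.1 ?_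
          intro x hx y hy
          rcases Nat.eq_zero_or_pos n with rfl | hn
          · simp [pow'] at hy
          · have hn0 : n ≠ 0 := hn.ne'
            have := (ihe hn0).1
            rw [this] at hy
            exact hht x hx y hy
        · intro t ht
          simp only [pow', List.mem_append] at ht
          rcases ht with ht | ht
          · exact hr.2 t ht
          · exact ihr.2 t ht
      refine ⟨hred, ?_, hlen, fun _ => ⟨?_, ?_⟩⟩
      · simp only [pow', prodW_append, ihp, pow_succ']
      · rw [pow', List.head?_append_of_ne_nil _ hne]
      · rcases Nat.eq_zero_or_pos n with rfl | hn
        · simp [pow']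
        · have h0 : pow' L n ≠ [] := by
            intro h
            have := ihl
            rw [h] at this
            simp at this
            rcases this with h | h
            · omega
            · exact hne h
          rw [pow', List.getLast?_append_of_ne_nil _ h0, (ihe hn.ne').2]

include htree hact hvw hAv hBw hAw hBv in
lemma hyper' (L : List (A ⊕ B)) (hr : Red L) (hne : L ≠ [])
    (hlast : ∀ x ∈ L.getLast?, x.isRight = true)
    (hhead : ∀ x ∈ L.head?, x.isLeft = true)
    (u : V) (hu : prodW L • u = u) : False := by
  set n : ℕ := 2 * X.dist u v + 1 with hn
  have hht : ∀ x ∈ L.getLast?, ∀ y ∈ L.head?, x.isLeft ≠ y.isLeft := by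
    intro x hx y hy
    have h1 := hlast x hx
    have h2 := hhead y hy
    cases x <;> cases y <;> simp_all
  obtain ⟨hredn, hpn, hlnn, hhe⟩ := pow'_facts (L := L) hr hne hht n
  have hn0 : n ≠ 0 := by omega
  have hlastn : ∀ x ∈ (pow' L n).getLast?, x.isRight = true := by
    intro x hx; rw [(hhe hn0).2] at hx; exact hlast x hx
  have hheadn : ∀ x ∈ (pow' L n).head?, x.isLeft = true := by
    intro x hx; rw [(hhe hn0).1] at hx; exact hhead x hx
  have hg := (grow htree hact hvw hAv hBw hAw hBv (pow' L n) hredn hlastn).1 hheadn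
  -- g^n fixes u
  have hfix : ∀ m : ℕ, (prodW L) ^ m • u = u := by
    intro m
    induction m with
    | zero => simp
    | succ m ihm => rw [pow_succ', mul_smul, ihm, hu]
  -- triangle bound
  have htri : X.dist ((prodW L) ^ n • v) v ≤ 2 * X.dist u v := by
    have t2 : X.dist ((prodW L) ^ n • v) ((prodW L) ^ n • u) = X.dist v u :=
      dist_smul' htree.isConnected hact _ _ _
    have t1 := htree.isConnected.dist_triangle (u := (prodW L) ^ n • v)
      (v := (prodW L) ^ n • u) (w := v)
    rw [t2] at t1
    rw [hfix n] at t1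
    rw [SimpleGraph.dist_comm (u := v) (v := u)] at t1
    omega
  have hlb : X.dist ((prodW L) ^ n • v) v = n * L.length := by
    rw [← hpn, hg.1, hlnn]
  have hL1 : 1 ≤ L.length := List.length_pos_iff.2 hne
  have : n ≤ n * L.length := Nat.le_mul_of_pos_right n (by omega)
  omega

include htree hact hvw hAv hBw hAw hBv in
lemma hyper (L : List (A ⊕ B)) (hr : Red L) (hne : L ≠ [])
    (hht : ∀ x ∈ L.getLast?, ∀ y ∈ L.head?, x.isLeft ≠ y.isLeft)
    (u : V) (hu : prodW L • u = u) : False := by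
  have hz : L.getLast? = some (L.getLast hne) := List.getLast?_eq_getLast hne
  have hh : L.head? = some (L.head hne) := List.head?_eq_head hne
  cases hzc : L.getLast hne with
  | inr b =>
      refine hyper' htree hact hvw hAv hBw hAw hBv L hr hne ?_ ?_ u hu
      · intro x hx
        rw [hz, hzc] at hx
        simp at hx; subst hx; rfl
      · intro y hy
        have := hht (L.getLast hne) (by rw [hz]; rfl) y hy
        rw [hzc] at this
        cases y <;> simp_all
  | inl a =>
      set L' : List (A ⊕ B) := (L.map invL).reverse with hL'
      obtain ⟨hr', hp'⟩ := red_inv_reverse hr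
      have hne' : L' ≠ [] := by simp [hL', hne]
      have hgl' : L'.getLast? = Option.map invL L.head? := by
        rw [hL', List.getLast?_reverse, List.head?_map]
      have hhd' : L'.head? = Option.map invL L.getLast? := by
        rw [hL', List.head?_reverse, List.getLast?_map]
      refine hyper' htree hact hvw hAv hBw hAw hBv L' hr' hne' ?_ ?_ u ?_
      · intro x hx
        rw [hgl', hh] at hx
        simp only [Option.map_some, Option.mem_def, Option.some.injEq] at hx
        subst hx
        have := hht (L.getLast hne) (by rw [hz]; rfl) (L.head hne) (by rw [hh]; rfl)
        rw [hzc] at this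
        cases hc : L.head hne with
        | inl a' => rw [hc] at this; simp at this
        | inr b' => simp [hc, invL]
      · intro x hx
        rw [hhd', hz, hzc] at hx
        simp only [Option.map_some, Option.mem_def, Option.some.injEq] at hx
        subst hx
        simp [invL]
      · rw [hp']
        exact inv_smul_eq_iff.2 hu.symm

lemma red_append_left {M : List (A ⊕ B)} {z : A ⊕ B} (h : Red (M ++ [z])) : Red M :=
  ⟨(List.isChain_append.1 h.1).1, fun t ht => h.2 t (List.mem_append_left _ ht)⟩

lemma red_replace_last {M : List (A ⊕ B)} {z z' : A ⊕ B} (h : Red (M ++ [z]))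
    (hside : z'.isLeft = z.isLeft)
    (hnt : z' ≠ Sum.inl 1 ∧ z' ≠ Sum.inr 1) : Red (M ++ [z']) := by
  obtain ⟨hc, hm⟩ := h
  unfold List.Chain' at hc
  rw [List.isChain_append] at hc
  constructor
  · unfold List.Chain'
    rw [List.isChain_append]
    refine ⟨hc.1, List.isChain_singleton _, ?_⟩
    intro x hx y hy
    simp only [List.head?_cons, Option.mem_def, Option.some.injEq] at hy
    subst hy
    rw [hside]
    exact hc.2.2 x hx z (by simp)
  · intro t ht
    rcases List.mem_append.1 ht with ht | ht
    · exact hm t (List.mem_append_left _ ht)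
    · simp only [List.mem_singleton] at ht; subst ht; exact hnt

lemma conj_case {g c h : Coprod A B} (hg : h = c⁻¹ * g * c)
    (hres : (∃ (k : Coprod A B) (a : A), h = k * Coprod.inl a * k⁻¹) ∨
      (∃ (k : Coprod A B) (b : B), h = k * Coprod.inr b * k⁻¹)) :
    (∃ (k : Coprod A B) (a : A), g = k * Coprod.inl a * k⁻¹) ∨
    (∃ (k : Coprod A B) (b : B), g = k * Coprod.inr b * k⁻¹) := by
  have hg' : g = c * h * c⁻¹ := by rw [hg]; group
  rcases hres with ⟨k, a, hk⟩ | ⟨k, b, hk⟩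
  · left; exact ⟨c * k, a, by rw [hg', hk]; group⟩
  · right; exact ⟨c * k, b, by rw [hg', hk]; group⟩

lemma fix_conj {g c h : Coprod A B} {u : V} (hg : h = c⁻¹ * g * c) (hu : g • u = u) :
    h • (c⁻¹ • u) = c⁻¹ • u := by
  rw [hg, mul_smul, mul_smul, smul_inv_smul, hu]

include htree hact hvw hAv hBw hAw hBv in
lemma main_ind : ∀ (n : ℕ) (L : List (A ⊕ B)), L.length ≤ n → Red L → ∀ u : V,
    prodW L • u = u →
    (∃ (k : Coprod A B) (a : A), prodW L = k * Coprod.inl a * k⁻¹) ∨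
    (∃ (k : Coprod A B) (b : B), prodW L = k * Coprod.inr b * k⁻¹) := by
  intro n
  induction n with
  | zero =>
      intro L hlen _ _ _
      have hL : L = [] := List.eq_nil_of_length_eq_zero (Nat.le_zero.1 hlen)
      left; exact ⟨1, 1, by simp [hL]⟩
  | succ n ih =>
      intro L hlen hr u hu
      rcases L with _ | ⟨x, _ | ⟨y, M⟩⟩
      · left; exact ⟨1, 1, by simp⟩
      · rcases x with a | b
        · left; exact ⟨1, a, by simp [prodW, emb]⟩
        · right; exact ⟨1, b, by simp [prodW, emb]⟩
      have hTne : (y :: M) ≠ [] := by simp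
      have hLne : (x :: y :: M) ≠ [] := by simp
      have hgl : (x :: y :: M).getLast hLne = (y :: M).getLast hTne :=
        List.getLast_cons hTne
      by_cases hsame : ((y :: M).getLast hTne).isLeft = x.isLeft
      case neg =>
        exfalso
        refine hyper htree hact hvw hAv hBw hAw hBv _ hr hLne ?_ u hu
        intro s hs t ht
        have hs' : s = (y :: M).getLast hTne := by
          rw [List.getLast?_eq_getLast hLne] at hs
          simp only [Option.mem_def, Option.some.injEq] at hs
          rw [← hs, hgl]
        have ht' : t = x := by
          have := ht; simp only [List.head?_cons, Option.mem_def, Option.some.injEq] at this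
          exact this.symm
        subst hs'; subst ht'; exact hsame
      case pos =>
        have hT : Red (y :: M) := hr.tail
        have hTdecomp : (y :: M).dropLast ++ [(y :: M).getLast hTne] = y :: M :=
          List.dropLast_append_getLast hTne
        set M' := (y :: M).dropLast with hM'
        set z := (y :: M).getLast hTne with hzdef
        have hTred : Red (M' ++ [z]) := by rw [hTdecomp]; exact hT
        have hlen' : M'.length + 1 = (y :: M).length := by
          have := congrArg List.length hTdecomp
          simpa using this
        have hlenL : (x :: y :: M).length ≤ n + 1 := hlen
        have hprodT : prodW (y :: M) = prodW M' * emb z := by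
          rw [← hTdecomp, prodW_append]; simp
      
        rcases x with a | b
        · -- x = inl a, so z = inl a'
          rcases hz : z with a' | b'
          case inr => rw [hz] at hsame; simp at hsame
          set c : Coprod A B := Coprod.inl a with hc
          have hprod : prodW (Sum.inl a :: y :: M) = c * (prodW M' * Coprod.inl a') := by
            rw [prodW_cons, hprodT, hz]; rfl
          by_cases hz1 : a' * a = 1
          · have hred2 : Red M' := red_append_left hTred
            have hconj : prodW M' = c⁻¹ * prodW (Sum.inl a :: y :: M) * c := by
              rw [hprod, hc]
              rw [show (Coprod.inl a : Coprod A B)⁻¹ * (Coprod.inl a * (prodW M' * Coprod.inl a')) * Coprod.inl a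
                  = prodW M' * (Coprod.inl a' * Coprod.inl a) by group]
              rw [← map_mul, hz1, map_one, mul_one]
            refine conj_case hconj (ih M' ?_ hred2 (c⁻¹ • u) (fix_conj hconj hu))
            simp only [List.length_cons] at hlenL hlen'
            omega
          · have hred2 : Red (M' ++ [Sum.inl (a' * a)]) := by
              refine red_replace_last hTred (by rw [hz]; rfl) ⟨by simpa using hz1, by simp⟩
            have hconj : prodW (M' ++ [Sum.inl (a' * a)])
                = c⁻¹ * prodW (Sum.inl a :: y :: M) * c := by
              rw [hprod, hc, prodW_append]
              rw [show prodW [(Sum.inl (a' * a) : A ⊕ B)] = Coprod.inl (a' * a) by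
                simp [prodW, emb]]
              rw [map_mul]
              group
            refine conj_case hconj (ih _ ?_ hred2 (c⁻¹ • u) (fix_conj hconj hu))
            simp only [List.length_append, List.length_cons, List.length_nil] at hlenL hlen' ⊢
            omega
        · -- x = inr b, so z = inr b'
          rcases hz : z with a' | b'
          case inl => rw [hz] at hsame; simp at hsame
          set c : Coprod A B := Coprod.inr b with hc
          have hprod : prodW (Sum.inr b :: y :: M) = c * (prodW M' * Coprod.inr b') := by
            rw [prodW_cons, hprodT, hz]; rfl
          by_cases hz1 : b' * b = 1
          · have hred2 : Red M' := red_append_left hTred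
            have hconj : prodW M' = c⁻¹ * prodW (Sum.inr b :: y :: M) * c := by
              rw [hprod, hc]
              rw [show (Coprod.inr b : Coprod A B)⁻¹ * (Coprod.inr b * (prodW M' * Coprod.inr b')) * Coprod.inr b
                  = prodW M' * (Coprod.inr b' * Coprod.inr b) by group]
              rw [← map_mul, hz1, map_one, mul_one]
            refine conj_case hconj (ih M' ?_ hred2 (c⁻¹ • u) (fix_conj hconj hu))
            simp only [List.length_cons] at hlenL hlen'
            omega
          · have hred2 : Red (M' ++ [Sum.inr (b' * b)]) := by
              refine red_replace_last hTred (by rw [hz]; rfl) ⟨by simp, by simpa using hz1⟩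
            have hconj : prodW (M' ++ [Sum.inr (b' * b)])
                = c⁻¹ * prodW (Sum.inr b :: y :: M) * c := by
              rw [hprod, hc, prodW_append]
              rw [show prodW [(Sum.inr (b' * b) : A ⊕ B)] = Coprod.inr (b' * b) by
                simp [prodW, emb]]
              rw [map_mul]
              group
            refine conj_case hconj (ih _ ?_ hred2 (c⁻¹ • u) (fix_conj hconj hu))
            simp only [List.length_append, List.length_cons, List.length_nil] at hlenL hlen' ⊢
            omega

end

end Stmt13Aux

open Monoid

/-- Suppose the free product `A ∗ B` acts by automorphisms on a tree `X`, and `v`, `w` are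
adjacent vertices such that `A` fixes `v`, `B` fixes `w`, no nontrivial element of `A`
fixes `w`, and no nontrivial element of `B` fixes `v`. Then every element of `A ∗ B` that
is not conjugate to an element of (the image of) `A` or of `B` fixes no vertex of `X`,
i.e. acts hyperbolically. -/
theorem stmt_13 {A B V : Type*} [Group A] [Group B]
    (X : SimpleGraph V) (htree : X.IsTree)
    [MulAction (Coprod A B) V]
    (hact : ∀ (g : Coprod A B) (u u' : V), X.Adj u u' → X.Adj (g • u) (g • u'))
    (v w : V) (hvw : X.Adj v w)
    (hAv : ∀ a : A, (Coprod.inl a : Coprod A B) • v = v)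
    (hBw : ∀ b : B, (Coprod.inr b : Coprod A B) • w = w)
    (hAw : ∀ a : A, a ≠ 1 → (Coprod.inl a : Coprod A B) • w ≠ w)
    (hBv : ∀ b : B, b ≠ 1 → (Coprod.inr b : Coprod A B) • v ≠ v)
    (g : Coprod A B)
    (hgA : ∀ (k : Coprod A B) (a : A), g ≠ k * Coprod.inl a * k⁻¹)
    (hgB : ∀ (k : Coprod A B) (b : B), g ≠ k * Coprod.inr b * k⁻¹) :
    ∀ u : V, g • u ≠ u := by
  intro u hu
  obtain ⟨L, hr, hp⟩ := Stmt13Aux.exists_red g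
  have hu' : Stmt13Aux.prodW L • u = u := by rw [hp]; exact hu
  rcases Stmt13Aux.main_ind htree hact hvw hAv hBw hAw hBv L.length L le_rfl hr u hu' with
    ⟨k, a, hk⟩ | ⟨k, b, hk⟩
  · exact hgA k a (by rw [← hp]; exact hk)
  · exact hgB k b (by rw [← hp]; exact hk)
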